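/- For r ∈ [0,1] let X_r be linear operators on a Hilbert space H and P_r projections on H × H with range G(X_r). Suppose (i) r ↦ P_r is continuous in operator norm, (ii) X₀ is bounded, and (iii) there exists L > 0 such that whenever X_r is bounded, ‖X_r‖ ≤ L. Then X_r is bounded for every r ∈ [0,1]. -/

import Mathlib

/-- if `P_r` are projections on `H × H` with range `G(X_r)`, `r ↦ P_r`
is operator-norm continuous on `[0,1]`, `X₀` is bounded, and there is a uniform bound
`L` for the norms of all bounded `X_r`, then every `X_r`, `r ∈ [0,1]`, is bounded. -/
theorem graph_continuity_boundedness
    {H : Type*} [NormedAddCommGroup H] [InnerProductSpace ℂ H] [CompleteSpace H]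
    (X : ℝ → (H →ₗ.[ℂ] H))
    (P : ℝ → ((H × H) →L[ℂ] (H × H)))
    (hproj : ∀ r ∈ Set.Icc (0 : ℝ) 1, ∀ z : H × H, P r (P r z) = P r z)
    (hrange : ∀ r ∈ Set.Icc (0 : ℝ) 1,
      Set.range (P r) = {z : H × H | ∃ u : (X r).domain, z = ((u : H), X r u)})
    (hcont : ContinuousOn P (Set.Icc (0 : ℝ) 1))
    (hX0 : ∃ K : ℝ, ∀ u : (X 0).domain, ‖X 0 u‖ ≤ K * ‖(u : H)‖)
    (L : ℝ) (hL : 0 < L)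
    (hunif : ∀ r ∈ Set.Icc (0 : ℝ) 1,
      (∃ K : ℝ, ∀ u : (X r).domain, ‖X r u‖ ≤ K * ‖(u : H)‖) →
      ∀ u : (X r).domain, ‖X r u‖ ≤ L * ‖(u : H)‖) :
    ∀ r ∈ Set.Icc (0 : ℝ) 1, ∃ K : ℝ, ∀ u : (X r).domain, ‖X r u‖ ≤ K * ‖(u : H)‖ := by
  set I : Set ℝ := Set.Icc (0 : ℝ) 1 with hI
  set ε : ℝ := (2 * (L + 1))⁻¹ with hε
  have hεpos : 0 < ε := by positivity
  have hhalf : (L + 1) * ε = 1 / 2 := by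
    rw [hε]; field_simp
  -- Key perturbation lemma
  have key : ∀ r ∈ I, ∀ s ∈ I, ‖P r - P s‖ < ε →
      (∃ K : ℝ, ∀ u : (X s).domain, ‖X s u‖ ≤ K * ‖(u : H)‖) →
      ∀ u : (X r).domain, ‖X r u‖ ≤ (2 * L + 1) * ‖(u : H)‖ := by
    intro r hr s hs hdist hsB u
    set z : H × H := ((u : H), X r u) with hz
    have hPz : P r z = z := by
      obtain ⟨w, hw⟩ : z ∈ Set.range (P r) := by
        rw [hrange r hr]; exact ⟨u, rfl⟩
      rw [← hw]; exact hproj r hr w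
    obtain ⟨v, hv⟩ : P s z ∈ {z' : H × H | ∃ u : (X s).domain, z' = ((u : H), X s u)} := by
      rw [← hrange s hs]; exact ⟨z, rfl⟩
    have hvbound : ‖X s v‖ ≤ L * ‖(v : H)‖ := hunif s hs hsB v
    have hdiff : ‖z - P s z‖ ≤ ε * ‖z‖ := by
      have heq : z - P s z = (P r - P s) z := by
        rw [ContinuousLinearMap.sub_apply, hPz]
      rw [heq]
      exact le_trans ((P r - P s).le_opNorm z)
        (mul_le_mul_of_nonneg_right hdist.le (norm_nonneg z))
    have h1 : ‖(u : H) - (v : H)‖ ≤ ε * ‖z‖ := by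
      have h := norm_fst_le (z - P s z)
      have hfst : (z - P s z).1 = (u : H) - (v : H) := by rw [Prod.fst_sub, hv]
      rw [hfst] at h
      exact le_trans h hdiff
    have h2 : ‖X r u - X s v‖ ≤ ε * ‖z‖ := by
      have h := norm_snd_le (z - P s z)
      have hsnd : (z - P s z).2 = X r u - X s v := by rw [Prod.snd_sub, hv]
      rw [hsnd] at h
      exact le_trans h hdiff
    have hzle : ‖z‖ ≤ ‖(u : H)‖ + ‖X r u‖ := by
      rw [Prod.norm_def]
      exact max_le (le_add_of_nonneg_right (norm_nonneg _))
        (le_add_of_nonneg_left (norm_nonneg _))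
    have hw2 : ‖(v : H)‖ ≤ ‖(u : H)‖ + ε * ‖z‖ := by
      have h3 : ‖(v : H)‖ - ‖(u : H)‖ ≤ ‖(u : H) - (v : H)‖ := by
        rw [norm_sub_rev]; exact norm_sub_norm_le _ _
      linarith
    have hXr : ‖X r u‖ ≤ L * ‖(v : H)‖ + ε * ‖z‖ := by
      have h3 : ‖X r u‖ - ‖X s v‖ ≤ ‖X r u - X s v‖ := norm_sub_norm_le _ _
      linarith
    have hznn : (0 : ℝ) ≤ ‖z‖ := norm_nonneg _
    have hunn : (0 : ℝ) ≤ ‖(u : H)‖ := norm_nonneg _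
    nlinarith [mul_le_mul_of_nonneg_left hw2 hL.le,
      mul_le_mul_of_nonneg_right hhalf.le hznn, hεpos.le]
  -- connectedness argument on the subtype
  haveI : PreconnectedSpace ↥I := Subtype.preconnectedSpace isPreconnected_Icc
  set Q : ↥I → ((H × H) →L[ℂ] (H × H)) := I.restrict P with hQdef
  have hQ : Continuous Q := hcont.restrict
  set S : Set ↥I := {r | ∃ K : ℝ, ∀ u : (X (r : ℝ)).domain, ‖X (r : ℝ) u‖ ≤ K * ‖(u : H)‖}
    with hS
  have hzero : (⟨0, by constructor <;> norm_num⟩ : ↥I) ∈ S := hX0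
  have hopen : IsOpen S := by
    rw [isOpen_iff_mem_nhds]
    intro r hr
    have hball : IsOpen {s : ↥I | dist (Q s) (Q r) < ε} := by
      have : Continuous fun s : ↥I => dist (Q s) (Q r) := hQ.dist continuous_const
      exact isOpen_lt this continuous_const
    have hrmem : r ∈ {s : ↥I | dist (Q s) (Q r) < ε} := by
      simp [dist_self, hεpos]
    refine Filter.mem_of_superset (hball.mem_nhds hrmem) ?_
    intro s hsb
    replace hsb : ‖Q s - Q r‖ < ε := (dist_eq_norm (Q s) (Q r)).symm.trans_lt hsb
    exact ⟨2 * L + 1, key s s.2 r r.2 hsb hr⟩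
  have hclosed : IsClosed S := by
    rw [← isOpen_compl_iff, isOpen_iff_mem_nhds]
    intro r hr
    have hball : IsOpen {s : ↥I | dist (Q r) (Q s) < ε} := by
      have : Continuous fun s : ↥I => dist (Q r) (Q s) := continuous_const.dist hQ
      exact isOpen_lt this continuous_const
    have hrmem : r ∈ {s : ↥I | dist (Q r) (Q s) < ε} := by
      simp [dist_self, hεpos]
    refine Filter.mem_of_superset (hball.mem_nhds hrmem) ?_
    intro s hsb hsS
    replace hsb : ‖Q r - Q s‖ < ε := (dist_eq_norm (Q r) (Q s)).symm.trans_lt hsb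
    exact hr ⟨2 * L + 1, key r r.2 s s.2 hsb hsS⟩
  have huniv : S = Set.univ :=
    (isClopen_iff.mp ⟨hclosed, hopen⟩).resolve_left
      (Set.nonempty_iff_ne_empty.mp ⟨_, hzero⟩)
  intro r hr
  have : (⟨r, hr⟩ : ↥I) ∈ S := huniv ▸ Set.mem_univ _
  exact this
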